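/- Let V be a finite-dimensional complex vector space with basis u₁,…,u_p, v₁,…,v_q and let f : V → V be the ℂ-linear map with f(u_i) = λ u_i and f(v_j) = λ̄ v_j for a fixed λ ∈ ℂ \ ℝ. Then every irreducible f-invariant real subspace of the realification V_ℝ is two-dimensional and of the form S_{(α:β)} = { γ Σᵢ αᵢ uᵢ + γ̄ Σⱼ conj(βⱼ) vⱼ : γ ∈ ℂ } for some (α₁,…,α_p, β₁,…,β_q) ∈ ℂ^{p+q} \ {0}; moreover S_{(α:β)} = S_{(α':β')} iff (α,β) and (α',β') are proportional over ℂ, and distinct such subspaces intersect trivially. -/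

import Mathlib

open Complex

/-- The real subspace `S_{(α:β)} = {γ Σ αᵢ uᵢ + γ̄ Σ conj(βⱼ) vⱼ : γ ∈ ℂ}`
associated to a coefficient vector `c = (α, β)`. -/
def Scarrier {p q : ℕ} {V : Type*} [AddCommGroup V] [Module ℂ V]
    (b : Module.Basis (Fin p ⊕ Fin q) ℂ V) (c : Fin p ⊕ Fin q → ℂ) : Set V :=
  {x | ∃ γ : ℂ,
    x = γ • (∑ i : Fin p, c (Sum.inl i) • b (Sum.inl i))
        + (starRingEnd ℂ γ) • (∑ j : Fin q, (starRingEnd ℂ (c (Sum.inr j))) • b (Sum.inr j))}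


section Helpers
variable {p q : ℕ} {V : Type*} [AddCommGroup V] [Module ℂ V]

/-- The element of `Scarrier b c` corresponding to `γ`. -/
noncomputable def SPhi (b : Module.Basis (Fin p ⊕ Fin q) ℂ V) (c : Fin p ⊕ Fin q → ℂ) (γ : ℂ) : V :=
  γ • (∑ i : Fin p, c (Sum.inl i) • b (Sum.inl i))
    + (starRingEnd ℂ γ) • (∑ j : Fin q, (starRingEnd ℂ (c (Sum.inr j))) • b (Sum.inr j))

lemma SPhi_eq_equivFun (b : Module.Basis (Fin p ⊕ Fin q) ℂ V) (c : Fin p ⊕ Fin q → ℂ) (γ : ℂ) :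
    SPhi b c γ = b.equivFun.symm
      (Sum.elim (fun i => γ * c (Sum.inl i))
        (fun j => (starRingEnd ℂ γ) * (starRingEnd ℂ (c (Sum.inr j))))) := by
  simp [SPhi, Module.Basis.equivFun_symm_apply, Fintype.sum_sum_type, Finset.smul_sum, smul_smul]

lemma SPhi_inj_iff (b : Module.Basis (Fin p ⊕ Fin q) ℂ V) (c c' : Fin p ⊕ Fin q → ℂ) (γ γ' : ℂ) :
    SPhi b c γ = SPhi b c' γ' ↔ γ • c = γ' • c' := by
  rw [SPhi_eq_equivFun, SPhi_eq_equivFun, b.equivFun.symm.injective.eq_iff]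
  constructor
  · intro h
    funext k
    cases k with
    | inl i => simpa using congrFun h (Sum.inl i)
    | inr j =>
        have h2 := congrArg (starRingEnd ℂ) (congrFun h (Sum.inr j))
        simpa using h2
  · intro h
    funext k
    cases k with
    | inl i => simpa using congrFun h (Sum.inl i)
    | inr j =>
        have h2 := congrArg (starRingEnd ℂ) (congrFun h (Sum.inr j))
        simpa using h2

lemma SPhi_zero (b : Module.Basis (Fin p ⊕ Fin q) ℂ V) (c : Fin p ⊕ Fin q → ℂ) :
    SPhi b c 0 = 0 := by simp [SPhi]

lemma SPhi_add (b : Module.Basis (Fin p ⊕ Fin q) ℂ V) (c : Fin p ⊕ Fin q → ℂ) (γ δ : ℂ) :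
    SPhi b c γ + SPhi b c δ = SPhi b c (γ + δ) := by
  simp only [SPhi, map_add, add_smul]; abel

lemma SPhi_real_smul (b : Module.Basis (Fin p ⊕ Fin q) ℂ V) (c : Fin p ⊕ Fin q → ℂ) (r : ℝ) (γ : ℂ) :
    r • SPhi b c γ = SPhi b c (r • γ) := by
  simp only [SPhi, smul_add, ← smul_assoc]
  congr 2
  simp [Complex.real_smul, map_mul, Complex.conj_ofReal]

lemma mem_Scarrier (b : Module.Basis (Fin p ⊕ Fin q) ℂ V) (c : Fin p ⊕ Fin q → ℂ) (x : V) :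
    x ∈ Scarrier b c ↔ ∃ γ : ℂ, x = SPhi b c γ := Iff.rfl

end Helpers
lemma SPhi_f {p q : ℕ} {V : Type*} [AddCommGroup V] [Module ℂ V]
    (b : Module.Basis (Fin p ⊕ Fin q) ℂ V) (c : Fin p ⊕ Fin q → ℂ)
    (lam : ℂ) (f : V →ₗ[ℂ] V)
    (hfu : ∀ i : Fin p, f (b (Sum.inl i)) = lam • b (Sum.inl i))
    (hfv : ∀ j : Fin q, f (b (Sum.inr j)) = (starRingEnd ℂ lam) • b (Sum.inr j))
    (γ : ℂ) : f (SPhi b c γ) = SPhi b c (lam * γ) := by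
  have hA : f (∑ i : Fin p, c (Sum.inl i) • b (Sum.inl i))
      = lam • ∑ i : Fin p, c (Sum.inl i) • b (Sum.inl i) := by
    rw [map_sum, Finset.smul_sum]
    simp [hfu, smul_smul, mul_comm]
  have hB : f (∑ j : Fin q, (starRingEnd ℂ (c (Sum.inr j))) • b (Sum.inr j))
      = (starRingEnd ℂ lam) • ∑ j : Fin q, (starRingEnd ℂ (c (Sum.inr j))) • b (Sum.inr j) := by
    rw [map_sum, Finset.smul_sum]
    simp [hfv, smul_smul, mul_comm]
  simp only [SPhi, map_add, LinearMap.map_smul, hA, hB, smul_smul, map_mul]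
  rw [mul_comm γ lam, mul_comm ((starRingEnd ℂ) γ) ((starRingEnd ℂ) lam)]

lemma SPhi_one_repr {p q : ℕ} {V : Type*} [AddCommGroup V] [Module ℂ V]
    (b : Module.Basis (Fin p ⊕ Fin q) ℂ V) (x : V) :
    SPhi b (Sum.elim (fun i => b.repr x (Sum.inl i))
      (fun j => starRingEnd ℂ (b.repr x (Sum.inr j)))) 1 = x := by
  rw [SPhi_eq_equivFun]
  have h : (Sum.elim (fun i => (1:ℂ) *
        (Sum.elim (fun i => b.repr x (Sum.inl i))
          (fun j => starRingEnd ℂ (b.repr x (Sum.inr j))) (Sum.inl i)))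
      (fun j => (starRingEnd ℂ (1:ℂ)) * (starRingEnd ℂ
        ((Sum.elim (fun i => b.repr x (Sum.inl i))
          (fun j => starRingEnd ℂ (b.repr x (Sum.inr j)))) (Sum.inr j)))) :
        Fin p ⊕ Fin q → ℂ) = b.equivFun x := by
    funext k
    cases k <;> simp [Module.Basis.equivFun_apply]
  rw [h, LinearEquiv.symm_apply_apply]

noncomputable def Ssub {p q : ℕ} {V : Type*} [AddCommGroup V] [Module ℂ V]
    (b : Module.Basis (Fin p ⊕ Fin q) ℂ V) (c : Fin p ⊕ Fin q → ℂ) : Submodule ℝ V where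
  carrier := Scarrier b c
  add_mem' := by
    rintro x y ⟨γ, rfl⟩ ⟨δ, rfl⟩
    exact ⟨γ + δ, SPhi_add b c γ δ⟩
  zero_mem' := ⟨0, (SPhi_zero b c).symm⟩
  smul_mem' := by
    rintro r x ⟨γ, rfl⟩
    exact ⟨r • γ, SPhi_real_smul b c r γ⟩

theorem irreducible_real_invariant_subspaces
    (p q : ℕ) (V : Type*) [AddCommGroup V] [Module ℂ V]
    (b : Module.Basis (Fin p ⊕ Fin q) ℂ V)
    (lam : ℂ) (hlam : lam.im ≠ 0)
    (f : V →ₗ[ℂ] V)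
    (hfu : ∀ i : Fin p, f (b (Sum.inl i)) = lam • b (Sum.inl i))
    (hfv : ∀ j : Fin q, f (b (Sum.inr j)) = (starRingEnd ℂ lam) • b (Sum.inr j)) :
    (∀ W : Submodule ℝ V,
      W ≠ ⊥ →
      (∀ x ∈ W, f x ∈ W) →
      (∀ U : Submodule ℝ V, U ≤ W → (∀ x ∈ U, f x ∈ U) → U = ⊥ ∨ U = W) →
      Module.finrank ℝ W = 2 ∧
        ∃ c : Fin p ⊕ Fin q → ℂ, c ≠ 0 ∧ (W : Set V) = Scarrier b c) ∧
    (∀ c c' : Fin p ⊕ Fin q → ℂ, c ≠ 0 → c' ≠ 0 →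
      (Scarrier b c = Scarrier b c' ↔ ∃ μ : ℂ, μ ≠ 0 ∧ c' = μ • c)) ∧
    (∀ c c' : Fin p ⊕ Fin q → ℂ, c ≠ 0 → c' ≠ 0 →
      (¬ ∃ μ : ℂ, μ ≠ 0 ∧ c' = μ • c) →
      Scarrier b c ∩ Scarrier b c' = {0}) := by
  have hdec : ∀ γ : ℂ, ∃ s t : ℝ, (s:ℂ) + (t:ℂ) * lam = γ := by
    intro γ
    refine ⟨γ.re - (γ.im / lam.im) * lam.re, γ.im / lam.im, ?_⟩
    apply Complex.ext
    · simp
      try ring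
    · simp [div_mul_cancel₀, hlam]
  refine ⟨?_, ?_, ?_⟩
  · -- Part 1
    intro W hW hWf hirr
    obtain ⟨x, hxW, hx0⟩ := (Submodule.ne_bot_iff W).mp hW
    set c : Fin p ⊕ Fin q → ℂ := Sum.elim (fun i => b.repr x (Sum.inl i))
      (fun j => starRingEnd ℂ (b.repr x (Sum.inr j))) with hcdef
    have hx : SPhi b c 1 = x := SPhi_one_repr b x
    have hc0 : c ≠ 0 := by
      intro h
      apply hx0
      have hrepr : b.repr x = 0 := by
        ext k
        cases k with
        | inl i => simpa [hcdef] using congrFun h (Sum.inl i)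
        | inr j =>
            have h2 := congrFun h (Sum.inr j)
            simp [hcdef] at h2
            simpa using h2
      have h3 := congrArg b.repr.symm hrepr
      simpa using h3
    have hfx : f x = SPhi b c lam := by
      rw [← hx, SPhi_f b c lam f hfu hfv, mul_one]
    have hcomb : ∀ s t : ℝ, s • x + t • f x = SPhi b c ((s:ℂ) + (t:ℂ)*lam) := by
      intro s t
      rw [hfx, ← hx, SPhi_real_smul, SPhi_real_smul, SPhi_add]
      congr 1
      simp [Complex.real_smul]
    have hSW : Ssub b c ≤ W := by
      rintro y ⟨γ, rfl⟩
      show SPhi b c γ ∈ W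
      obtain ⟨s, t, hst⟩ := hdec γ
      rw [← hst, ← hcomb s t]
      exact W.add_mem (W.smul_mem s hxW) (W.smul_mem t (hWf x hxW))
    have hSf : ∀ y ∈ Ssub b c, f y ∈ Ssub b c := by
      rintro y ⟨γ, rfl⟩
      exact ⟨lam * γ, SPhi_f b c lam f hfu hfv γ⟩
    have hne : Ssub b c ≠ ⊥ := by
      intro h
      apply hx0
      have hxS : x ∈ Ssub b c := ⟨1, hx.symm⟩
      rw [h] at hxS
      simpa using hxS
    have hSeq : Ssub b c = W := (hirr (Ssub b c) hSW hSf).resolve_left hne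
    constructor
    · -- finrank
      have hli : LinearIndependent ℝ ![x, f x] := by
        rw [LinearIndependent.pair_iff]
        intro s t h0
        have h1 : SPhi b c ((s:ℂ) + (t:ℂ)*lam) = SPhi b c 0 := by
          rw [← hcomb s t, h0, SPhi_zero]
        have h2 := (SPhi_inj_iff b c c _ 0).mp h1
        rw [zero_smul] at h2
        have hγ0 : ((s:ℂ) + (t:ℂ)*lam) = 0 := (smul_eq_zero.mp h2).resolve_right hc0
        have him := congrArg Complex.im hγ0
        simp at him
        have ht : t = 0 := him.resolve_right hlam
        have hre := congrArg Complex.re hγ0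
        simp [ht] at hre
        exact ⟨hre, ht⟩
      have hspan : W = Submodule.span ℝ (Set.range ![x, f x]) := by
        apply le_antisymm
        · rw [← hSeq]
          rintro y ⟨γ, rfl⟩
          show SPhi b c γ ∈ _
          obtain ⟨s, t, hst⟩ := hdec γ
          rw [← hst, ← hcomb s t]
          refine Submodule.add_mem _ (Submodule.smul_mem _ _ (Submodule.subset_span ?_))
            (Submodule.smul_mem _ _ (Submodule.subset_span ?_))
          · exact ⟨0, rfl⟩
          · exact ⟨1, rfl⟩
        · rw [Submodule.span_le]
          rintro y ⟨k, rfl⟩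
          fin_cases k
          · exact hxW
          · exact hWf x hxW
      rw [hspan, finrank_span_eq_card hli]
      simp
    · exact ⟨c, hc0, by rw [← hSeq]; rfl⟩
  · -- Part 2
    intro c c' hc hc'
    constructor
    · intro h
      have h1 : SPhi b c 1 ∈ Scarrier b c' := by
        rw [← h]; exact ⟨1, rfl⟩
      obtain ⟨γ, hγ⟩ := h1
      have h2 : (1:ℂ) • c = γ • c' := (SPhi_inj_iff b c c' 1 γ).mp hγ
      rw [one_smul] at h2
      have hγ0 : γ ≠ 0 := by
        rintro rfl
        rw [zero_smul] at h2
        exact hc h2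
      exact ⟨γ⁻¹, inv_ne_zero hγ0, by rw [h2, smul_smul, inv_mul_cancel₀ hγ0, one_smul]⟩
    · rintro ⟨μ, hμ, rfl⟩
      ext y
      constructor
      · rintro ⟨γ, rfl⟩
        exact ⟨γ * μ⁻¹, (SPhi_inj_iff b c (μ • c) γ (γ * μ⁻¹)).mpr
          (by rw [smul_smul, mul_assoc, inv_mul_cancel₀ hμ, mul_one])⟩
      · rintro ⟨γ, rfl⟩
        exact ⟨γ * μ, (SPhi_inj_iff b (μ • c) c γ (γ * μ)).mpr
          (by rw [smul_smul, ← smul_smul])⟩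
  · -- Part 3
    intro c c' hc hc' hnp
    ext y
    simp only [Set.mem_inter_iff, Set.mem_singleton_iff]
    constructor
    · rintro ⟨⟨γ, rfl⟩, ⟨δ, hδ⟩⟩
      have h := (SPhi_inj_iff b c c' γ δ).mp hδ
      have hδ0 : δ = 0 := by
        by_contra hd
        have hγ0 : γ ≠ 0 := by
          rintro rfl
          rw [zero_smul] at h
          exact hc' ((smul_eq_zero.mp h.symm).resolve_left hd)
        exact hnp ⟨δ⁻¹ * γ, mul_ne_zero (inv_ne_zero hd) hγ0,
          by rw [mul_smul, h, inv_smul_smul₀ hd]⟩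
      rw [hδ0, zero_smul] at h
      have hγ0 : γ = 0 := (smul_eq_zero.mp h).resolve_right hc
      show SPhi b c γ = 0
      rw [hγ0, SPhi_zero]
    · rintro rfl
      exact ⟨⟨0, (SPhi_zero b c).symm⟩, ⟨0, (SPhi_zero b c').symm⟩⟩
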